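/- Let (F₁, F₂) and (G₁, G₂) be the CHFIS pairs, with the same parameters α_{n,m}, β_{n,m}, γ_{n,m}, for generalized interpolation data Δ = {(x_i, y_j, z_{i,j}, t_{i,j})} and Δ* = {(x_i, y_j, z_{i,j}, t*_{i,j})} respectively (same knots and same z-values, perturbed hidden-variable values). Then the self-affine components satisfy sup_{(x,y) ∈ S} |F₂(x,y) − G₂(x,y)| ≤ (4(1+γ)/(1−γ)) · max{ |t_{n,m} − t*_{n,m}| : 0 ≤ n ≤ N, 0 ≤ m ≤ M }, where γ = max_{n,m}|γ_{n,m}|. -/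

import Mathlib

open Real Set

noncomputable section

/-- `z_eva` (resp. `t_eva`) from the paper: `z N M - z N 0 - z 0 M + z 0 0`. -/
def eva (N M : ℕ) (z : ℕ → ℕ → ℝ) : ℝ := z N M - z N 0 - z 0 M + z 0 0

/-- The coefficient `g_{n,m}` determined by the join-up conditions. -/
def gCoef (N M : ℕ) (x y : ℕ → ℝ) (z t : ℕ → ℕ → ℝ) (a b : ℕ → ℕ → ℝ) (n m : ℕ) : ℝ :=
  (z (n-1) (m-1) - z (n-1) m - z n (m-1) + z n m
    - a n m * eva N M z - b n m * eva N M t) / ((x 0 - x N) * (y 0 - y M))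

/-- The coefficient `e_{n,m}`. -/
def eCoef (N M : ℕ) (x y : ℕ → ℝ) (z t : ℕ → ℕ → ℝ) (a b : ℕ → ℕ → ℝ) (n m : ℕ) : ℝ :=
  (z (n-1) (m-1) - z n (m-1) - a n m * (z 0 0 - z N 0) - b n m * (t 0 0 - t N 0)
    - gCoef N M x y z t a b n m * (x 0 - x N) * y 0) / (x 0 - x N)

/-- The coefficient `f_{n,m}`. -/
def fCoef (N M : ℕ) (x y : ℕ → ℝ) (z t : ℕ → ℕ → ℝ) (a b : ℕ → ℕ → ℝ) (n m : ℕ) : ℝ :=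
  (z (n-1) (m-1) - z (n-1) m - a n m * (z 0 0 - z 0 M) - b n m * (t 0 0 - t 0 M)
    - gCoef N M x y z t a b n m * (y 0 - y M) * x 0) / (y 0 - y M)

/-- The coefficient `k_{n,m}`. -/
def kCoef (N M : ℕ) (x y : ℕ → ℝ) (z t : ℕ → ℕ → ℝ) (a b : ℕ → ℕ → ℝ) (n m : ℕ) : ℝ :=
  z n m - eCoef N M x y z t a b n m * x N - fCoef N M x y z t a b n m * y M
    - a n m * z N M - b n m * t N M - gCoef N M x y z t a b n m * x N * y M

/-- `p_{n,m}(X,Y) = e_{n,m} X + f_{n,m} Y + g_{n,m} X Y + k_{n,m}`. -/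
def pMap (N M : ℕ) (x y : ℕ → ℝ) (z t : ℕ → ℕ → ℝ) (a b : ℕ → ℕ → ℝ) (n m : ℕ)
    (X Y : ℝ) : ℝ :=
  eCoef N M x y z t a b n m * X + fCoef N M x y z t a b n m * Y
    + gCoef N M x y z t a b n m * X * Y + kCoef N M x y z t a b n m

/-- `q_{n,m}(X,Y) = ẽ_{n,m} X + f̃_{n,m} Y + g̃_{n,m} X Y + k̃_{n,m}`; it is `p` built from the
data `t` with parameters `γ` and `0`. -/
def qMap (N M : ℕ) (x y : ℕ → ℝ) (t : ℕ → ℕ → ℝ) (c : ℕ → ℕ → ℝ) (n m : ℕ) (X Y : ℝ) : ℝ :=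
  pMap N M x y t t c (fun _ _ => 0) n m X Y

/-- `φ_n` (resp. `ψ_m`): the affine map of `[x₀, x_N]` onto `[x_{n-1}, x_n]`. -/
def phiMap (N : ℕ) (x : ℕ → ℝ) (n : ℕ) (X : ℝ) : ℝ :=
  x (n-1) + (x n - x (n-1)) * (X - x 0) / (x N - x 0)

/-- Validity of generalized interpolation data: `N, M ≥ 1`, strictly increasing knots,
`|α_{n,m}| < 1` and `|β_{n,m}| + |γ_{n,m}| < 1`. -/
structure DataOK (N M : ℕ) (x y : ℕ → ℝ) (a b c : ℕ → ℕ → ℝ) : Prop where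
  hN : 1 ≤ N
  hM : 1 ≤ M
  hx : ∀ i < N, x i < x (i+1)
  hy : ∀ j < M, y j < y (j+1)
  ha : ∀ n m, 1 ≤ n → n ≤ N → 1 ≤ m → m ≤ M → |a n m| < 1
  hbc : ∀ n m, 1 ≤ n → n ≤ N → 1 ≤ m → m ≤ M → |b n m| + |c n m| < 1

/-- `(F₁, F₂)` is the CHFIS pair for the generalized interpolation data. -/
def IsCHFIS (N M : ℕ) (x y : ℕ → ℝ) (z t : ℕ → ℕ → ℝ) (a b c : ℕ → ℕ → ℝ)
    (F₁ F₂ : ℝ → ℝ → ℝ) : Prop :=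
  ContinuousOn (fun P : ℝ × ℝ => F₁ P.1 P.2) (Icc (x 0) (x N) ×ˢ Icc (y 0) (y M)) ∧
  ContinuousOn (fun P : ℝ × ℝ => F₂ P.1 P.2) (Icc (x 0) (x N) ×ˢ Icc (y 0) (y M)) ∧
  (∀ i ≤ N, ∀ j ≤ M, F₁ (x i) (y j) = z i j ∧ F₂ (x i) (y j) = t i j) ∧
  ∀ n m, 1 ≤ n → n ≤ N → 1 ≤ m → m ≤ M →
    ∀ X ∈ Icc (x 0) (x N), ∀ Y ∈ Icc (y 0) (y M),
      F₁ (phiMap N x n X) (phiMap M y m Y)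
        = a n m * F₁ X Y + b n m * F₂ X Y + pMap N M x y z t a b n m X Y ∧
      F₂ (phiMap N x n X) (phiMap M y m Y)
        = c n m * F₂ X Y + qMap N M x y t c n m X Y

/-- The invariance-of-ratio condition between the knots `x, y` and the knots `xs, ys`. -/
def RatioInv (N M : ℕ) (x y xs ys : ℕ → ℝ) : Prop :=
  (∀ n, 1 ≤ n → n ≤ N → (x 0 - x N) / (xs 0 - xs N) = (x (n-1) - x n) / (xs (n-1) - xs n)) ∧
  (∀ m, 1 ≤ m → m ≤ M → (y 0 - y M) / (ys 0 - ys M) = (y (m-1) - y m) / (ys (m-1) - ys m))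

/-- `T : [x₀, x_N] → [xs₀, xs_N]` is the cell-wise affine transfer map, sending
`[x_{n-1}, x_n]` affinely onto `[xs_{n-1}, xs_n]` (one coordinate of `R` resp. `K`). -/
def IsTransfer (N : ℕ) (x xs : ℕ → ℝ) (T : ℝ → ℝ) : Prop :=
  ∀ n, 1 ≤ n → n ≤ N → ∀ X ∈ Icc (x (n-1)) (x n),
    T X = xs (n-1) + (xs n - xs (n-1)) * (X - x (n-1)) / (x n - x (n-1))

/-- `max { |a n m| : 1 ≤ n ≤ N, 1 ≤ m ≤ M }` (as an `sSup`). -/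
def supParam (N M : ℕ) (a : ℕ → ℕ → ℝ) : ℝ :=
  sSup {v : ℝ | ∃ n m, 1 ≤ n ∧ n ≤ N ∧ 1 ≤ m ∧ m ≤ M ∧ v = |a n m|}

/-- `max { (|x_n - xs_n| + |y_m - ys_m|)^δ : 0 ≤ n ≤ N, 0 ≤ m ≤ M }` (as an `sSup`). -/
def supKnotDiff (N M : ℕ) (x xs y ys : ℕ → ℝ) (d : ℝ) : ℝ :=
  sSup {v : ℝ | ∃ n m, n ≤ N ∧ m ≤ M ∧ v = (|x n - xs n| + |y m - ys m|) ^ d}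

/-- `max { |z_{n,m} - zs_{n,m}| : 0 ≤ n ≤ N, 0 ≤ m ≤ M }` (as an `sSup`). -/
def supValDiff (N M : ℕ) (z zs : ℕ → ℕ → ℝ) : ℝ :=
  sSup {v : ℝ | ∃ n m, n ≤ N ∧ m ≤ M ∧ v = |z n m - zs n m|}

/-- `max { |z_{i,j} - z_{k,l}| : 0 ≤ i,j,k,l ≤ N }` (as an `sSup`). -/
def supPairDiff (N : ℕ) (z : ℕ → ℕ → ℝ) : ℝ :=
  sSup {v : ℝ | ∃ i j k l, i ≤ N ∧ j ≤ N ∧ k ≤ N ∧ l ≤ N ∧ v = |z i j - z k l|}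


section CHAux

variable {N M : ℕ} {x y : ℕ → ℝ}

lemma CH_pMap_c00 (z t : ℕ → ℕ → ℝ) (a b : ℕ → ℕ → ℝ) (n m : ℕ)
    (hA : x 0 - x N ≠ 0) (hB : y 0 - y M ≠ 0) :
    pMap N M x y z t a b n m (x 0) (y 0)
      = z (n-1) (m-1) - a n m * z 0 0 - b n m * t 0 0 := by
  unfold pMap kCoef eCoef fCoef gCoef eva
  field_simp
  ring

lemma CH_pMap_c0M (z t : ℕ → ℕ → ℝ) (a b : ℕ → ℕ → ℝ) (n m : ℕ)
    (hA : x 0 - x N ≠ 0) (hB : y 0 - y M ≠ 0) :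
    pMap N M x y z t a b n m (x 0) (y M)
      = z (n-1) m - a n m * z 0 M - b n m * t 0 M := by
  unfold pMap kCoef eCoef fCoef gCoef eva
  field_simp
  ring

lemma CH_pMap_cN0 (z t : ℕ → ℕ → ℝ) (a b : ℕ → ℕ → ℝ) (n m : ℕ)
    (hA : x 0 - x N ≠ 0) (hB : y 0 - y M ≠ 0) :
    pMap N M x y z t a b n m (x N) (y 0)
      = z n (m-1) - a n m * z N 0 - b n m * t N 0 := by
  unfold pMap kCoef eCoef fCoef gCoef eva
  field_simp
  ring

lemma CH_pMap_cNM (z t : ℕ → ℕ → ℝ) (a b : ℕ → ℕ → ℝ) (n m : ℕ)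
    (hA : x 0 - x N ≠ 0) (hB : y 0 - y M ≠ 0) :
    pMap N M x y z t a b n m (x N) (y M)
      = z n m - a n m * z N M - b n m * t N M := by
  unfold pMap kCoef eCoef fCoef gCoef eva
  field_simp
  ring

lemma CH_bilin_bound (e f g k x0 xN y0 yM X Y C : ℝ) (hx : x0 < xN) (hy : y0 < yM)
    (hX : X ∈ Icc x0 xN) (hY : Y ∈ Icc y0 yM)
    (h00 : |e*x0 + f*y0 + g*x0*y0 + k| ≤ C)
    (h0M : |e*x0 + f*yM + g*x0*yM + k| ≤ C)
    (hN0 : |e*xN + f*y0 + g*xN*y0 + k| ≤ C)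
    (hNM : |e*xN + f*yM + g*xN*yM + k| ≤ C) :
    |e*X + f*Y + g*X*Y + k| ≤ C := by
  obtain ⟨hX1, hX2⟩ := hX
  obtain ⟨hY1, hY2⟩ := hY
  set l : ℝ := (xN - X)/(xN - x0) with hl
  set u : ℝ := (yM - Y)/(yM - y0) with hu
  have hxne : xN - x0 ≠ 0 := by linarith
  have hyne : yM - y0 ≠ 0 := by linarith
  have hl0 : 0 ≤ l := by apply div_nonneg <;> linarith
  have hl1 : l ≤ 1 := by rw [div_le_one (by linarith)]; linarith
  have hu0 : 0 ≤ u := by apply div_nonneg <;> linarith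
  have hu1 : u ≤ 1 := by rw [div_le_one (by linarith)]; linarith
  have hid : e*X + f*Y + g*X*Y + k
      = l*u*(e*x0 + f*y0 + g*x0*y0 + k) + l*(1-u)*(e*x0 + f*yM + g*x0*yM + k)
        + (1-l)*u*(e*xN + f*y0 + g*xN*y0 + k) + (1-l)*(1-u)*(e*xN + f*yM + g*xN*yM + k) := by
    have hXe : X = l*x0 + (1-l)*xN := by rw [hl]; field_simp; ring
    have hYe : Y = u*y0 + (1-u)*yM := by rw [hu]; field_simp; ring
    rw [hXe, hYe]; ring
  rw [hid, abs_le]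
  obtain ⟨a1, a2⟩ := abs_le.mp h00
  obtain ⟨b1, b2⟩ := abs_le.mp h0M
  obtain ⟨c1, c2⟩ := abs_le.mp hN0
  obtain ⟨d1, d2⟩ := abs_le.mp hNM
  constructor <;> nlinarith [mul_nonneg hl0 hu0, mul_nonneg hl0 (by linarith : (0:ℝ) ≤ 1-u),
    mul_nonneg (by linarith : (0:ℝ) ≤ 1-l) hu0,
    mul_nonneg (by linarith : (0:ℝ) ≤ 1-l) (by linarith : (0:ℝ) ≤ 1-u)]

lemma CH_mono (hx : ∀ i < N, x i < x (i+1)) :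
    ∀ i j, i < j → j ≤ N → x i < x j := by
  intro i j hij hjN
  induction j with
  | zero => omega
  | succ j ih =>
    rcases Nat.lt_succ_iff_lt_or_eq.mp hij with h | h
    · exact lt_trans (ih h (by omega)) (hx j (by omega))
    · subst h; exact hx i (by omega)

lemma CH_cover {N : ℕ} {x : ℕ → ℝ} (hN : 1 ≤ N) (hx : ∀ i < N, x i < x (i+1)) :
    ∀ u ∈ Icc (x 0) (x N), ∃ n, 1 ≤ n ∧ n ≤ N ∧ u ∈ Icc (x (n-1)) (x n) := by
  induction N with
  | zero => omega
  | succ N ih =>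
    intro u hu
    rcases Nat.eq_or_lt_of_le hN with h | h
    · exact ⟨1, le_refl _, by omega, by simpa [← h] using hu⟩
    · by_cases hc : u ≤ x N
      · obtain ⟨n, h1, h2, h3⟩ := ih (by omega) (fun i hi => hx i (by omega)) u ⟨hu.1, hc⟩
        exact ⟨n, h1, by omega, h3⟩
      · exact ⟨N+1, by omega, le_refl _, ⟨by simpa using le_of_not_ge hc, hu.2⟩⟩

lemma CH_supParam (hN : 1 ≤ N) (hM : 1 ≤ M) (c : ℕ → ℕ → ℝ) :
    (∀ n m, 1 ≤ n → n ≤ N → 1 ≤ m → m ≤ M → |c n m| ≤ supParam N M c) ∧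
    ∃ n m, 1 ≤ n ∧ n ≤ N ∧ 1 ≤ m ∧ m ≤ M ∧ supParam N M c = |c n m| := by
  have hfin : {v : ℝ | ∃ n m, 1 ≤ n ∧ n ≤ N ∧ 1 ≤ m ∧ m ≤ M ∧ v = |c n m|}.Finite := by
    apply Set.Finite.subset (Set.Finite.image (fun p : ℕ × ℕ => |c p.1 p.2|)
      ((Set.finite_Iic N).prod (Set.finite_Iic M)))
    rintro v ⟨n, m, _, hn, _, hm, rfl⟩
    exact ⟨(n, m), ⟨hn, hm⟩, rfl⟩
  have hne : {v : ℝ | ∃ n m, 1 ≤ n ∧ n ≤ N ∧ 1 ≤ m ∧ m ≤ M ∧ v = |c n m|}.Nonempty :=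
    ⟨|c 1 1|, 1, 1, le_refl _, hN, le_refl _, hM, rfl⟩
  constructor
  · intro n m h1 h2 h3 h4
    exact le_csSup hfin.bddAbove ⟨n, m, h1, h2, h3, h4, rfl⟩
  · exact hne.csSup_mem hfin

lemma CH_supValDiff (t ts : ℕ → ℕ → ℝ) :
    ∀ n m, n ≤ N → m ≤ M → |t n m - ts n m| ≤ supValDiff N M t ts := by
  intro n m hn hm
  have hfin : {v : ℝ | ∃ n m, n ≤ N ∧ m ≤ M ∧ v = |t n m - ts n m|}.Finite := by
    apply Set.Finite.subset (Set.Finite.image (fun p : ℕ × ℕ => |t p.1 p.2 - ts p.1 p.2|)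
      ((Set.finite_Iic N).prod (Set.finite_Iic M)))
    rintro v ⟨n, m, hn, hm, rfl⟩
    exact ⟨(n, m), ⟨hn, hm⟩, rfl⟩
  exact le_csSup hfin.bddAbove ⟨n, m, hn, hm, rfl⟩

lemma CH_qdiff_bound (t ts : ℕ → ℕ → ℝ) (c : ℕ → ℕ → ℝ)
    (n m : ℕ) (hn : n ≤ N) (hm : m ≤ M)
    (hA : x 0 < x N) (hB : y 0 < y M)
    (γ D : ℝ) (hγ : |c n m| ≤ γ) (hγ0 : 0 ≤ γ)
    (hD : ∀ i ≤ N, ∀ j ≤ M, |t i j - ts i j| ≤ D)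
    (X Y : ℝ) (hX : X ∈ Icc (x 0) (x N)) (hY : Y ∈ Icc (y 0) (y M)) :
    |qMap N M x y t c n m X Y - qMap N M x y ts c n m X Y| ≤ (1 + γ) * D := by
  have hAne : x 0 - x N ≠ 0 := by linarith
  have hBne : y 0 - y M ≠ 0 := by linarith
  have q00 : qMap N M x y t c n m (x 0) (y 0) = t (n-1) (m-1) - c n m * t 0 0 := by
    have := CH_pMap_c00 (x := x) (y := y) t t c (fun _ _ => 0) n m hAne hBne
    simpa [qMap] using this
  have q00' : qMap N M x y ts c n m (x 0) (y 0) = ts (n-1) (m-1) - c n m * ts 0 0 := by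
    have := CH_pMap_c00 (x := x) (y := y) ts ts c (fun _ _ => 0) n m hAne hBne
    simpa [qMap] using this
  have q0M : qMap N M x y t c n m (x 0) (y M) = t (n-1) m - c n m * t 0 M := by
    have := CH_pMap_c0M (x := x) (y := y) t t c (fun _ _ => 0) n m hAne hBne
    simpa [qMap] using this
  have q0M' : qMap N M x y ts c n m (x 0) (y M) = ts (n-1) m - c n m * ts 0 M := by
    have := CH_pMap_c0M (x := x) (y := y) ts ts c (fun _ _ => 0) n m hAne hBne
    simpa [qMap] using this
  have qN0 : qMap N M x y t c n m (x N) (y 0) = t n (m-1) - c n m * t N 0 := by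
    have := CH_pMap_cN0 (x := x) (y := y) t t c (fun _ _ => 0) n m hAne hBne
    simpa [qMap] using this
  have qN0' : qMap N M x y ts c n m (x N) (y 0) = ts n (m-1) - c n m * ts N 0 := by
    have := CH_pMap_cN0 (x := x) (y := y) ts ts c (fun _ _ => 0) n m hAne hBne
    simpa [qMap] using this
  have qNM : qMap N M x y t c n m (x N) (y M) = t n m - c n m * t N M := by
    have := CH_pMap_cNM (x := x) (y := y) t t c (fun _ _ => 0) n m hAne hBne
    simpa [qMap] using this
  have qNM' : qMap N M x y ts c n m (x N) (y M) = ts n m - c n m * ts N M := by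
    have := CH_pMap_cNM (x := x) (y := y) ts ts c (fun _ _ => 0) n m hAne hBne
    simpa [qMap] using this
  have key : ∀ A B A' B' : ℝ, |A - A'| ≤ D → |B - B'| ≤ D →
      |(A - c n m * B) - (A' - c n m * B')| ≤ (1 + γ) * D := by
    intro A B A' B' h1 h2
    have heq : (A - c n m * B) - (A' - c n m * B') = (A - A') - c n m * (B - B') := by ring
    rw [heq]
    calc |(A - A') - c n m * (B - B')| ≤ |A - A'| + |c n m * (B - B')| := abs_sub _ _
      _ ≤ D + γ * D := add_le_add h1 (by
          rw [abs_mul]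
          exact mul_le_mul hγ h2 (abs_nonneg _) hγ0)
      _ = (1 + γ) * D := by ring
  set e' : ℝ := eCoef N M x y t t c (fun _ _ => 0) n m
    - eCoef N M x y ts ts c (fun _ _ => 0) n m with he'
  set f' : ℝ := fCoef N M x y t t c (fun _ _ => 0) n m
    - fCoef N M x y ts ts c (fun _ _ => 0) n m with hf'
  set g' : ℝ := gCoef N M x y t t c (fun _ _ => 0) n m
    - gCoef N M x y ts ts c (fun _ _ => 0) n m with hg'
  set k' : ℝ := kCoef N M x y t t c (fun _ _ => 0) n m
    - kCoef N M x y ts ts c (fun _ _ => 0) n m with hk'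
  have hform : ∀ U V : ℝ, qMap N M x y t c n m U V - qMap N M x y ts c n m U V
      = e'*U + f'*V + g'*U*V + k' := by
    intro U V
    rw [he', hf', hg', hk']
    simp only [qMap, pMap]
    ring
  rw [hform X Y]
  apply CH_bilin_bound e' f' g' k' (x 0) (x N) (y 0) (y M) X Y _ hA hB hX hY
  · rw [← hform (x 0) (y 0), q00, q00']
    exact key _ _ _ _ (hD _ (by omega) _ (by omega)) (hD _ (by omega) _ (by omega))
  · rw [← hform (x 0) (y M), q0M, q0M']
    exact key _ _ _ _ (hD _ (by omega) _ (by omega)) (hD _ (by omega) _ (by omega))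
  · rw [← hform (x N) (y 0), qN0, qN0']
    exact key _ _ _ _ (hD _ (by omega) _ (by omega)) (hD _ (by omega) _ (by omega))
  · rw [← hform (x N) (y M), qNM, qNM']
    exact key _ _ _ _ (hD _ (by omega) _ (by omega)) (hD _ (by omega) _ (by omega))

end CHAux

/-- stability of the self-affine component `F₂` with respect to perturbation
of the hidden variable `t`. -/
theorem chfis_stability_hidden_F2 (N M : ℕ) (x y : ℕ → ℝ) (z t ts : ℕ → ℕ → ℝ)
    (a b c : ℕ → ℕ → ℝ)
    (hD : DataOK N M x y a b c)
    (F₁ F₂ G₁ G₂ : ℝ → ℝ → ℝ)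
    (hF : IsCHFIS N M x y z t a b c F₁ F₂)
    (hG : IsCHFIS N M x y z ts a b c G₁ G₂) :
    ∀ X ∈ Icc (x 0) (x N), ∀ Y ∈ Icc (y 0) (y M),
      |F₂ X Y - G₂ X Y| ≤
        4 * (1 + supParam N M c) / (1 - supParam N M c) * supValDiff N M t ts := by
  -- main proof
  classical
  obtain ⟨hN, hM, hx, hy, ha, hbc⟩ := hD
  have hA : x 0 < x N := CH_mono hx 0 N (by omega) (le_refl _)
  have hB : y 0 < y M := CH_mono hy 0 M (by omega) (le_refl _)
  set γ : ℝ := supParam N M c with hγdef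
  set D : ℝ := supValDiff N M t ts with hDdef
  obtain ⟨hγub, n₀, m₀, hn₀1, hn₀N, hm₀1, hm₀M, hγeq⟩ := CH_supParam hN hM c
  have hγ0 : 0 ≤ γ := by rw [hγdef, hγeq]; exact abs_nonneg _
  have hγ1 : γ < 1 := by
    rw [hγdef, hγeq]
    have := hbc n₀ m₀ hn₀1 hn₀N hm₀1 hm₀M
    have := abs_nonneg (b n₀ m₀)
    linarith
  have hDub : ∀ i ≤ N, ∀ j ≤ M, |t i j - ts i j| ≤ D := fun i hi j hj =>
    CH_supValDiff t ts i j hi hj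
  have hD0 : 0 ≤ D := le_trans (abs_nonneg _) (hDub 0 (by omega) 0 (by omega))
  -- compactness: maximum of |F₂ - G₂| on S
  set S : Set (ℝ × ℝ) := Icc (x 0) (x N) ×ˢ Icc (y 0) (y M) with hSdef
  have hScomp : IsCompact S := isCompact_Icc.prod isCompact_Icc
  have hSne : S.Nonempty := ⟨(x 0, y 0), ⟨⟨le_refl _, le_of_lt hA⟩, ⟨le_refl _, le_of_lt hB⟩⟩⟩
  have hHcont : ContinuousOn (fun P : ℝ × ℝ => |F₂ P.1 P.2 - G₂ P.1 P.2|) S :=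
    (hF.2.1.sub hG.2.1).abs
  obtain ⟨P₀, hP₀S, hmaxP⟩ := hScomp.exists_isMaxOn hSne hHcont
  have hmax : ∀ P ∈ S, |F₂ P.1 P.2 - G₂ P.1 P.2| ≤ |F₂ P₀.1 P₀.2 - G₂ P₀.1 P₀.2| :=
    fun P hP => hmaxP hP
  set E : ℝ := |F₂ P₀.1 P₀.2 - G₂ P₀.1 P₀.2| with hEdef
  -- key: E ≤ (1+γ)/(1-γ) * D
  have key : E * (1 - γ) ≤ (1 + γ) * D := by
    obtain ⟨hu, hv⟩ := hP₀S
    obtain ⟨n, hn1, hnN, hun⟩ := CH_cover hN hx P₀.1 hu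
    obtain ⟨m, hm1, hmM, hvm⟩ := CH_cover hM hy P₀.2 hv
    have hxn : x (n-1) < x n := CH_mono hx (n-1) n (by omega) hnN
    have hym : y (m-1) < y m := CH_mono hy (m-1) m (by omega) hmM
    have hxnne : x n - x (n-1) ≠ 0 := by linarith
    have hymne : y m - y (m-1) ≠ 0 := by linarith
    have hAne : x N - x 0 ≠ 0 := by linarith
    have hBne : y M - y 0 ≠ 0 := by linarith
    set X₀ : ℝ := x 0 + (P₀.1 - x (n-1)) * (x N - x 0) / (x n - x (n-1)) with hX₀def
    set Y₀ : ℝ := y 0 + (P₀.2 - y (m-1)) * (y M - y 0) / (y m - y (m-1)) with hY₀def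
    have hX₀ : X₀ ∈ Icc (x 0) (x N) := by
      constructor
      · rw [hX₀def]
        have : 0 ≤ (P₀.1 - x (n-1)) * (x N - x 0) / (x n - x (n-1)) :=
          div_nonneg (mul_nonneg (by linarith [hun.1]) (by linarith)) (by linarith)
        linarith
      · rw [hX₀def]
        rw [← sub_nonneg]
        have : x N - (x 0 + (P₀.1 - x (n-1)) * (x N - x 0) / (x n - x (n-1)))
            = (x n - P₀.1) * (x N - x 0) / (x n - x (n-1)) := by
          field_simp
          ring
        rw [this]
        exact div_nonneg (mul_nonneg (by linarith [hun.2]) (by linarith)) (by linarith)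
    have hY₀ : Y₀ ∈ Icc (y 0) (y M) := by
      constructor
      · rw [hY₀def]
        have : 0 ≤ (P₀.2 - y (m-1)) * (y M - y 0) / (y m - y (m-1)) :=
          div_nonneg (mul_nonneg (by linarith [hvm.1]) (by linarith)) (by linarith)
        linarith
      · rw [hY₀def]
        rw [← sub_nonneg]
        have : y M - (y 0 + (P₀.2 - y (m-1)) * (y M - y 0) / (y m - y (m-1)))
            = (y m - P₀.2) * (y M - y 0) / (y m - y (m-1)) := by
          field_simp
          ring
        rw [this]
        exact div_nonneg (mul_nonneg (by linarith [hvm.2]) (by linarith)) (by linarith)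
    have hphi : phiMap N x n X₀ = P₀.1 := by
      rw [phiMap, hX₀def]
      field_simp
      ring
    have hpsi : phiMap M y m Y₀ = P₀.2 := by
      rw [phiMap, hY₀def]
      field_simp
      ring
    have hFe := (hF.2.2.2 n m hn1 hnN hm1 hmM X₀ hX₀ Y₀ hY₀).2
    have hGe := (hG.2.2.2 n m hn1 hnN hm1 hmM X₀ hX₀ Y₀ hY₀).2
    rw [hphi, hpsi] at hFe hGe
    have hdecomp : F₂ P₀.1 P₀.2 - G₂ P₀.1 P₀.2
        = c n m * (F₂ X₀ Y₀ - G₂ X₀ Y₀)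
          + (qMap N M x y t c n m X₀ Y₀ - qMap N M x y ts c n m X₀ Y₀) := by
      rw [hFe, hGe]; ring
    have hq : |qMap N M x y t c n m X₀ Y₀ - qMap N M x y ts c n m X₀ Y₀| ≤ (1 + γ) * D :=
      CH_qdiff_bound t ts c n m hnN hmM hA hB γ D
        (hγub n m hn1 hnN hm1 hmM) hγ0 hDub X₀ Y₀ hX₀ hY₀
    have hHle : |F₂ X₀ Y₀ - G₂ X₀ Y₀| ≤ E := hmax (X₀, Y₀) ⟨hX₀, hY₀⟩
    have hE1 : E ≤ γ * E + (1 + γ) * D := by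
      calc E = |c n m * (F₂ X₀ Y₀ - G₂ X₀ Y₀)
            + (qMap N M x y t c n m X₀ Y₀ - qMap N M x y ts c n m X₀ Y₀)| := by
            rw [hEdef, hdecomp]
        _ ≤ |c n m * (F₂ X₀ Y₀ - G₂ X₀ Y₀)|
            + |qMap N M x y t c n m X₀ Y₀ - qMap N M x y ts c n m X₀ Y₀| := abs_add_le _ _
        _ ≤ γ * E + (1 + γ) * D := by
            apply add_le_add _ hq
            rw [abs_mul]
            exact mul_le_mul (hγub n m hn1 hnN hm1 hmM) hHle (abs_nonneg _) hγ0
    nlinarith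
  -- conclude
  intro X hX Y hY
  have h1 : |F₂ X Y - G₂ X Y| ≤ E := hmax (X, Y) ⟨hX, hY⟩
  have h2 : E ≤ (1 + γ) / (1 - γ) * D := by
    rw [div_mul_eq_mul_div, le_div_iff₀ (by linarith)]
    nlinarith
  have h3 : (1 + γ) / (1 - γ) * D ≤ 4 * (1 + γ) / (1 - γ) * D := by
    have hnn : 0 ≤ (1 + γ) / (1 - γ) * D :=
      mul_nonneg (div_nonneg (by linarith) (by linarith)) hD0
    have : 4 * (1 + γ) / (1 - γ) * D = 4 * ((1 + γ) / (1 - γ) * D) := by ring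
    rw [this]
    linarith
  linarith


end
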